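/- Under the conditions 0 < π < 1, p11 > p12, p11 > p22, and p11 + p22 > 2*p12, the function Q(R,P) = (r11²p11 + 2r11r12p12 + r12²p22)/(r11+r12)² − (r11r21p11 + r11r22p12 + r12r21p12 + r12r22p22)/((r11+r12)(r21+r22)) is uniquely maximized over nonnegative 2×2 matrices R with column sums (π, 1−π) and positive row sums by R = diag(π, 1−π). -/

import Mathlib

/-- The population criterion Q is uniquely maximized over feasible R by diag(π, 1-π). -/
theorem stmt_7 (π p11 p12 p22 : ℝ)
    (hπ : 0 < π) (hπ1 : π < 1)
    (h1 : p11 > p12) (h2 : p11 > p22) (h3 : p11 + p22 > 2 * p12)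
    (Q : ℝ → ℝ → ℝ → ℝ → ℝ)
    (hQ : ∀ r11 r12 r21 r22, Q r11 r12 r21 r22 =
      (r11 ^ 2 * p11 + 2 * r11 * r12 * p12 + r12 ^ 2 * p22) / (r11 + r12) ^ 2
        - (r11 * r21 * p11 + r11 * r22 * p12 + r12 * r21 * p12 + r12 * r22 * p22)
          / ((r11 + r12) * (r21 + r22))) :
    ∀ r11 r12 r21 r22 : ℝ,
      0 ≤ r11 → 0 ≤ r12 → 0 ≤ r21 → 0 ≤ r22 →
      r11 + r21 = π → r12 + r22 = 1 - π →
      0 < r11 + r12 → 0 < r21 + r22 →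
      (Q r11 r12 r21 r22 ≤ Q π 0 0 (1 - π) ∧
        (Q r11 r12 r21 r22 = Q π 0 0 (1 - π) →
          r11 = π ∧ r12 = 0 ∧ r21 = 0 ∧ r22 = 1 - π)) := by
  intro r11 r12 r21 r22 h11 h12 h21 h22 hc1 hc2 hs ht
  have hπ1' : (0:ℝ) < 1 - π := by linarith
  have hQstar : Q π 0 0 (1 - π) = p11 - p12 := by
    rw [hQ]
    rw [div_sub_div _ _ (by positivity : (π+0:ℝ)^2 ≠ 0) (by positivity : (π+0)*(0+(1-π)) ≠ 0)]
    rw [div_eq_iff (by positivity : (π+0:ℝ)^2 * ((π+0)*(0+(1-π))) ≠ 0)]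
    ring
  set s := r11 + r12 with hsdef
  set t := r21 + r22 with htdef
  set N := r12 * ((p11 - p12) * s * t + (p11 + p22 - 2 * p12) * r11 * t
      - (p22 - p12) * r21 * s) + (p11 - p12) * r11 * r21 * s with hNdef
  have hP : 0 < (p11 - p12) * s * t + (p11 + p22 - 2 * p12) * r11 * t
      - (p22 - p12) * r21 * s := by
    rcases le_or_gt (p22 - p12) 0 with hb | hb
    · nlinarith [mul_pos hs ht, mul_nonneg h21 (le_of_lt hs),
        mul_nonneg h11 (le_of_lt ht)]
    · have hr21t : r21 ≤ t := by rw [htdef]; linarith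
      nlinarith [mul_pos hs ht, mul_nonneg h11 (le_of_lt ht),
        mul_le_mul_of_nonneg_right (mul_le_mul_of_nonneg_left hr21t (le_of_lt hb)) (le_of_lt hs),
        mul_nonneg (mul_nonneg (by linarith : (0:ℝ) ≤ p11+p22-2*p12) h11) (le_of_lt ht)]
  have hN0 : 0 ≤ N := by
    have h1' : 0 ≤ r12 * ((p11 - p12) * s * t + (p11 + p22 - 2 * p12) * r11 * t
        - (p22 - p12) * r21 * s) := mul_nonneg h12 (le_of_lt hP)
    have h2' : 0 ≤ (p11 - p12) * r11 * r21 * s :=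
      mul_nonneg (mul_nonneg (mul_nonneg (by linarith) h11) h21) (le_of_lt hs)
    rw [hNdef]; linarith
  have hkey : Q r11 r12 r21 r22 = (p11 - p12) - N / (s ^ 2 * t) := by
    rw [hQ, hNdef, ← hsdef, ← htdef]
    field_simp
    ring
  have hden : 0 < s ^ 2 * t := by positivity
  constructor
  · rw [hkey, hQstar]
    have : 0 ≤ N / (s ^ 2 * t) := div_nonneg hN0 (le_of_lt hden)
    linarith
  · intro heq
    rw [hkey, hQstar] at heq
    have hNzero : N = 0 := by
      have : N / (s ^ 2 * t) = 0 := by linarith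
      field_simp at this
      simpa using this
    have h1' : 0 ≤ r12 * ((p11 - p12) * s * t + (p11 + p22 - 2 * p12) * r11 * t
        - (p22 - p12) * r21 * s) := mul_nonneg h12 (le_of_lt hP)
    have h2' : 0 ≤ (p11 - p12) * r11 * r21 * s :=
      mul_nonneg (mul_nonneg (mul_nonneg (by linarith) h11) h21) (le_of_lt hs)
    have hterm1 : r12 * ((p11 - p12) * s * t + (p11 + p22 - 2 * p12) * r11 * t
        - (p22 - p12) * r21 * s) = 0 := by rw [hNdef] at hNzero; linarith
    have hterm2 : (p11 - p12) * r11 * r21 * s = 0 := by rw [hNdef] at hNzero; linarith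
    have hr12 : r12 = 0 := by
      rcases mul_eq_zero.mp hterm1 with h | h
      · exact h
      · exfalso; exact ne_of_gt hP h
    have hr11pos : 0 < r11 := by
      rw [hsdef, hr12] at hs; simpa using hs
    have hr21 : r21 = 0 := by
      rcases mul_eq_zero.mp hterm2 with h | h
      · rcases mul_eq_zero.mp h with h' | h'
        · rcases mul_eq_zero.mp h' with h'' | h''
          · exfalso; linarith
          · exfalso; linarith
        · exact h'
      · exfalso; exact ne_of_gt hs h
    refine ⟨by linarith, hr12, hr21, by linarith⟩
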